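/- For every integer N ≥ 0 and every δ ∈ (0, 1) there is a constant C > 0 such that for all z ∈ ℂ with |z| ≥ 1 and dist(z, i[0,∞)) ≥ δ|z|, the function e₁ satisfies |e₁(z) − (1/(2πi)) Σ_{k=0}^{N} (−1)^k k!/(2πiz)^{k+1}| ≤ C·|z|^{−N−2}; that is, e₁(z) admits the Gevrey-1 asymptotic expansion (1/(2πi)) Σ_{k≥0} (−1)^k k!/(2πiz)^{k+1} as z → ∞ away from the cut i[0,∞). -/

import Mathlib

noncomputable section

open Complex Filter Topology MeasureTheory Set

/-- `e₁(z) = (1/2πi) ∫₀^∞ e^{-2πt}/(t + iz) dt`. -/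
def e1 (z : ℂ) : ℂ :=
  1 / (2 * Real.pi * I) *
    ∫ t in Set.Ioi (0 : ℝ), Complex.exp (-2 * Real.pi * t) / ((t : ℂ) + I * z)

lemma aux_real_int (m : ℕ) :
    ∫ t in Ioi (0:ℝ), t ^ m * Real.exp (-(2 * Real.pi * t)) =
      m.factorial / (2 * Real.pi) ^ (m + 1) := by
  have hr : (0:ℝ) < 2 * Real.pi := by positivity
  have h := Real.integral_rpow_mul_exp_neg_mul_Ioi (a := (m:ℝ) + 1) (r := 2 * Real.pi)
    (by positivity) hr
  rw [add_sub_cancel_right, Real.Gamma_nat_eq_factorial,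
    show ((m:ℝ) + 1) = ((m + 1 : ℕ) : ℝ) by push_cast; ring, Real.rpow_natCast] at h
  rw [show ∫ t in Ioi (0:ℝ), t ^ m * Real.exp (-(2 * Real.pi * t))
      = ∫ t in Ioi (0:ℝ), t ^ ((m:ℝ)) * Real.exp (-(2 * Real.pi * t)) by
    refine setIntegral_congr_fun measurableSet_Ioi (fun t ht => ?_)
    rw [Real.rpow_natCast], h]
  rw [one_div, inv_pow, div_eq_mul_inv, mul_comm]

lemma aux_integrable (m : ℕ) :
    IntegrableOn (fun t : ℝ => t ^ m * Real.exp (-(2 * Real.pi * t))) (Ioi 0) := by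
  by_contra h
  have h2 := aux_real_int m
  rw [MeasureTheory.integral_undef h] at h2
  have h3 : (0:ℝ) < m.factorial / (2 * Real.pi) ^ (m + 1) := by positivity
  rw [← h2] at h3
  exact lt_irrefl _ h3

lemma geom_remainder (n : ℕ) (t w : ℂ) (hw : w ≠ 0) (htw : t + w ≠ 0) :
    1 / (t + w) - ∑ k ∈ Finset.range (n + 1), (-1) ^ k * t ^ k / w ^ (k + 1)
      = (-1) ^ (n + 1) * t ^ (n + 1) / (w ^ (n + 1) * (t + w)) := by
  induction n with
  | zero =>
    simp only [Finset.sum_range_one, pow_zero, pow_one, one_mul, zero_add]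
    rw [div_sub_div _ _ htw hw, div_eq_div_iff (mul_ne_zero htw hw) (mul_ne_zero hw htw)]
    ring
  | succ n ih =>
    rw [Finset.sum_range_succ, ← sub_sub, ih]
    field_simp
    ring

/-- The function `e₁` has the Gevrey-1 asymptotic expansion
`(1/2πi) Σ_k (-1)^k k!/(2πiz)^{k+1}` as `z → ∞` away from the cut `i[0,∞)`: for every
`N` and every `δ ∈ (0,1)` there is `C > 0` such that whenever `|z| ≥ 1` and
`dist(z, i[0,∞)) ≥ δ|z|`, the error after `N + 1` terms is at most `C·|z|^{-N-2}`. -/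
theorem stmt13 (N : ℕ) (δ : ℝ) (hδ0 : 0 < δ) (hδ1 : δ < 1) :
    ∃ C : ℝ, 0 < C ∧ ∀ z : ℂ, 1 ≤ ‖z‖ →
      δ * ‖z‖ ≤ Metric.infDist z {w : ℂ | w.re = 0 ∧ 0 ≤ w.im} →
      ‖e1 z - 1 / (2 * Real.pi * I) *
          ∑ k ∈ Finset.range (N + 1),
            (-1) ^ k * (k.factorial : ℂ) / (2 * Real.pi * I * z) ^ (k + 1)‖
        ≤ C * (‖z‖ ^ (N + 2))⁻¹ := by
  have hπ : (0:ℝ) < 2 * Real.pi := by positivity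
  refine ⟨(N+1).factorial / ((2*Real.pi)^(N+3) * δ), by positivity, fun z hz hdist => ?_⟩
  set w : ℂ := I * z with hw_def
  have hnz : (0:ℝ) < ‖z‖ := lt_of_lt_of_le one_pos hz
  have hz0 : z ≠ 0 := by simpa using hnz.ne'
  have hw0 : w ≠ 0 := mul_ne_zero I_ne_zero hz0
  have hwnorm : ‖w‖ = ‖z‖ := by simp [hw_def]
  -- lower bound on |t + w|
  have hlow : ∀ t : ℝ, 0 ≤ t → δ * ‖z‖ ≤ ‖(t:ℂ) + w‖ := by
    intro t ht
    have hmem : (I * (t:ℂ)) ∈ {w : ℂ | w.re = 0 ∧ 0 ≤ w.im} := by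
      constructor <;> simp [ht]
    have h1 : Metric.infDist z {w : ℂ | w.re = 0 ∧ 0 ≤ w.im} ≤ dist z (I * t) :=
      Metric.infDist_le_dist_of_mem hmem
    have h2 : dist z (I * (t:ℂ)) = ‖(t:ℂ) + w‖ := by
      have he : (t:ℂ) + w = I * (z - I*t) := by
        rw [hw_def, mul_sub, ← mul_assoc, Complex.I_mul_I]; ring
      rw [dist_eq_norm, he, norm_mul, Complex.norm_I, one_mul]
    linarith
  have hlowpos : (0:ℝ) < δ * ‖z‖ := by positivity
  have htw0 : ∀ t : ℝ, 0 ≤ t → (t:ℂ) + w ≠ 0 := fun t ht h => by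
    have := hlow t ht; rw [h, norm_zero] at this; linarith
  -- integrability of the complex integrands with denominator
  have hcont : ∀ m : ℕ, IntegrableOn
      (fun t : ℝ => Complex.exp (-2 * Real.pi * t) * (t:ℂ) ^ m / ((t:ℂ) + w)) (Ioi 0) := by
    intro m
    have hmeas : AEStronglyMeasurable
        (fun t : ℝ => Complex.exp (-2 * Real.pi * t) * (t:ℂ) ^ m / ((t:ℂ) + w))
        (volume.restrict (Ioi 0)) := by
      refine ContinuousOn.aestronglyMeasurable ?_ measurableSet_Ioi
      refine ContinuousOn.div (Continuous.continuousOn (by fun_prop))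
        (Continuous.continuousOn (by fun_prop)) ?_
      intro t ht
      exact htw0 t (le_of_lt ht)
    refine Integrable.mono' ((aux_integrable m).mul_const ((δ * ‖z‖)⁻¹)) hmeas ?_
    filter_upwards [ae_restrict_mem measurableSet_Ioi] with t ht
    have ht0 : (0:ℝ) < t := ht
    have he : ‖Complex.exp (-2 * (Real.pi:ℂ) * t)‖ = Real.exp (-(2 * Real.pi * t)) := by
      rw [show (-2*(Real.pi:ℂ)*t) = ((-(2*Real.pi*t):ℝ):ℂ) by push_cast; ring,
        Complex.norm_exp, Complex.ofReal_re]
    rw [norm_div, norm_mul, he, norm_pow, Complex.norm_real, Real.norm_of_nonneg ht0.le]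
    calc Real.exp (-(2 * Real.pi * t)) * t ^ m / ‖(t:ℂ) + w‖
        ≤ Real.exp (-(2 * Real.pi * t)) * t ^ m / (δ * ‖z‖) := by
          apply div_le_div_of_nonneg_left _ hlowpos (hlow t ht0.le)
          positivity
      _ = t ^ m * Real.exp (-(2 * Real.pi * t)) * (δ * ‖z‖)⁻¹ := by
          rw [div_eq_mul_inv]
          ring
  -- integrability of exp * t^k (no denominator), as complex
  have hint2 : ∀ m : ℕ, IntegrableOn
      (fun t : ℝ => Complex.exp (-2 * Real.pi * t) * (t:ℂ) ^ m) (Ioi 0) := by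
    intro m
    have h1 : IntegrableOn
        (fun t : ℝ => ((t ^ m * Real.exp (-(2 * Real.pi * t)) : ℝ) : ℂ)) (Ioi 0) :=
      (aux_integrable m).ofReal
    refine h1.congr_fun (fun t ht => ?_) measurableSet_Ioi
    rw [show (-2*(Real.pi:ℂ)*t) = ((-(2*Real.pi*t):ℝ):ℂ) by push_cast; ring,
      ← Complex.ofReal_exp]
    push_cast
    ring
  -- value of moment integrals
  have hmom : ∀ m : ℕ, ∫ t in Ioi (0:ℝ), Complex.exp (-2 * Real.pi * t) * (t:ℂ) ^ m
      = ((m.factorial / (2*Real.pi) ^ (m+1) : ℝ) : ℂ) := by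
    intro m
    rw [← aux_real_int m]
    have heq : ∫ t in Ioi (0:ℝ), Complex.exp (-2 * Real.pi * t) * (t:ℂ) ^ m
        = ∫ t in Ioi (0:ℝ), ((t ^ m * Real.exp (-(2*Real.pi*t)) : ℝ) : ℂ) := by
      refine setIntegral_congr_fun measurableSet_Ioi fun t ht => ?_
      rw [show (-2*(Real.pi:ℂ)*t) = ((-(2*Real.pi*t):ℝ):ℂ) by push_cast; ring,
        ← Complex.ofReal_exp]
      push_cast
      ring
    rw [heq]
    exact integral_ofReal
  -- the sum as an integral
  have hB : (∑ k ∈ Finset.range (N + 1),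
        (-1:ℂ) ^ k * (k.factorial : ℂ) / (2 * Real.pi * I * z) ^ (k + 1))
      = ∫ t in Ioi (0:ℝ), ∑ k ∈ Finset.range (N + 1),
          Complex.exp (-2 * Real.pi * t) * (t:ℂ) ^ k * ((-1) ^ k / w ^ (k + 1)) := by
    rw [integral_finset_sum _ (fun k _ => (hint2 k).mul_const _)]
    refine Finset.sum_congr rfl fun k hk => ?_
    rw [MeasureTheory.integral_mul_const, hmom k]
    have h2 : (2*(Real.pi:ℂ)*I*z)^(k+1) = ((2*Real.pi:ℝ):ℂ)^(k+1) * w^(k+1) := by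
      rw [← mul_pow]
      push_cast
      ring
    rw [h2]
    have hwk : w ^ (k+1) ≠ 0 := pow_ne_zero _ hw0
    have hpk : ((2*Real.pi:ℝ):ℂ) ^ (k+1) ≠ 0 :=
      pow_ne_zero _ (Complex.ofReal_ne_zero.mpr hπ.ne')
    push_cast
    field_simp
  -- difference equals remainder integral
  have hdiff : (∫ t in Ioi (0:ℝ), Complex.exp (-2 * Real.pi * t) / ((t : ℂ) + w))
      - (∑ k ∈ Finset.range (N + 1),
          (-1:ℂ) ^ k * (k.factorial : ℂ) / (2 * Real.pi * I * z) ^ (k + 1))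
      = ∫ t in Ioi (0:ℝ), Complex.exp (-2 * Real.pi * t) *
          ((-1) ^ (N+1) * (t:ℂ) ^ (N+1) / (w ^ (N+1) * ((t:ℂ) + w))) := by
    have hS : IntegrableOn (fun t : ℝ => ∑ k ∈ Finset.range (N+1),
        Complex.exp (-2*Real.pi*t) * (t:ℂ)^k * ((-1)^k / w^(k+1))) (Ioi 0) :=
      integrable_finset_sum _ (fun k _ => (hint2 k).mul_const _)
    have hcont0 : IntegrableOn (fun t : ℝ => Complex.exp (-2*Real.pi*t) / ((t:ℂ)+w))
        (Ioi 0) := by simpa using hcont 0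
    rw [hB, ← integral_sub hcont0 hS]
    refine setIntegral_congr_fun measurableSet_Ioi fun t ht => ?_
    have ht0 : (0:ℝ) < t := ht
    have hg := geom_remainder N (t:ℂ) w hw0 (htw0 t ht0.le)
    have hfactor : Complex.exp (-2*Real.pi*t) / ((t:ℂ)+w) - ∑ k ∈ Finset.range (N+1),
          Complex.exp (-2*Real.pi*t) * (t:ℂ)^k * ((-1)^k / w^(k+1))
        = Complex.exp (-2*Real.pi*t) * (1/((t:ℂ)+w)
            - ∑ k ∈ Finset.range (N+1), (-1)^k * (t:ℂ)^k / w^(k+1)) := by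
      rw [mul_sub, mul_one_div, Finset.mul_sum]
      congr 1
      refine Finset.sum_congr rfl fun k _ => ?_
      ring
    simp only [hfactor, hg]
  -- norm bound for remainder integral
  have hbound : ‖∫ t in Ioi (0:ℝ), Complex.exp (-2 * Real.pi * t) *
        ((-1) ^ (N+1) * (t:ℂ) ^ (N+1) / (w ^ (N+1) * ((t:ℂ) + w)))‖
      ≤ (N+1).factorial / (2*Real.pi) ^ (N+2) * (δ * ‖z‖ ^ (N+2))⁻¹ := by
    have hgint : Integrable
        (fun t:ℝ => t^(N+1) * Real.exp (-(2*Real.pi*t)) * (δ*‖z‖^(N+2))⁻¹)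
        (volume.restrict (Ioi 0)) := (aux_integrable (N+1)).mul_const _
    refine le_trans (norm_integral_le_of_norm_le hgint ?_) ?_
    case refine_2 =>
      rw [MeasureTheory.integral_mul_const, aux_real_int (N+1)]
    · filter_upwards [ae_restrict_mem measurableSet_Ioi] with t ht
      have ht0 : (0:ℝ) < t := ht
      have he : ‖Complex.exp (-2 * (Real.pi:ℂ) * t)‖ = Real.exp (-(2 * Real.pi * t)) := by
        rw [show (-2*(Real.pi:ℂ)*t) = ((-(2*Real.pi*t):ℝ):ℂ) by push_cast; ring,
          Complex.norm_exp, Complex.ofReal_re]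
      have h1 : ‖(-1:ℂ)^(N+1) * (t:ℂ)^(N+1) / (w^(N+1) * ((t:ℂ)+w))‖
          = t^(N+1) / (‖z‖^(N+1) * ‖(t:ℂ)+w‖) := by
        rw [norm_div, norm_mul, norm_mul, norm_pow, norm_pow, norm_pow, norm_neg,
          norm_one, one_pow, one_mul, Complex.norm_real, Real.norm_of_nonneg ht0.le, hwnorm]
      have h2 : δ * ‖z‖^(N+2) ≤ ‖z‖^(N+1) * ‖(t:ℂ)+w‖ := by
        have := mul_le_mul_of_nonneg_left (hlow t ht0.le) (by positivity : (0:ℝ) ≤ ‖z‖^(N+1))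
        calc δ * ‖z‖^(N+2) = ‖z‖^(N+1) * (δ * ‖z‖) := by ring
          _ ≤ ‖z‖^(N+1) * ‖(t:ℂ)+w‖ := this
      rw [norm_mul, he, h1]
      calc Real.exp (-(2*Real.pi*t)) * (t^(N+1) / (‖z‖^(N+1) * ‖(t:ℂ)+w‖))
          ≤ Real.exp (-(2*Real.pi*t)) * (t^(N+1) / (δ * ‖z‖^(N+2))) := by
            refine mul_le_mul_of_nonneg_left ?_ (Real.exp_nonneg _)
            exact div_le_div_of_nonneg_left (by positivity) (by positivity) h2
        _ = t^(N+1) * Real.exp (-(2*Real.pi*t)) * (δ*‖z‖^(N+2))⁻¹ := by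
            rw [div_eq_mul_inv]
            ring
  -- put it together
  have hfac : e1 z - 1 / (2 * Real.pi * I) *
        ∑ k ∈ Finset.range (N + 1),
          (-1) ^ k * (k.factorial : ℂ) / (2 * Real.pi * I * z) ^ (k + 1)
      = 1 / (2 * Real.pi * I) *
        ((∫ t in Ioi (0:ℝ), Complex.exp (-2 * Real.pi * t) / ((t : ℂ) + w))
          - ∑ k ∈ Finset.range (N + 1),
            (-1:ℂ) ^ k * (k.factorial : ℂ) / (2 * Real.pi * I * z) ^ (k + 1)) := by
    rw [e1, mul_sub]
  have hnorm1 : ‖(1 : ℂ) / (2 * Real.pi * I)‖ = (2 * Real.pi)⁻¹ := by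
    rw [norm_div, norm_one, norm_mul, norm_mul, Complex.norm_I, mul_one, one_div]
    norm_num [Complex.norm_real, abs_of_pos Real.pi_pos]
  rw [hfac, norm_mul, hnorm1, hdiff]
  calc (2*Real.pi)⁻¹ * ‖_‖ ≤ (2*Real.pi)⁻¹ *
        ((N+1).factorial / (2*Real.pi) ^ (N+2) * (δ * ‖z‖ ^ (N+2))⁻¹) := by
        exact mul_le_mul_of_nonneg_left hbound (by positivity)
    _ = (N+1).factorial / ((2*Real.pi)^(N+3) * δ) * (‖z‖ ^ (N + 2))⁻¹ := by
        rw [mul_inv]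
        field_simp
        ring
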